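/- (Corollary 2, predictor part; equality in data processing implies sufficiency.) Let E : 𝒳 → ℱ be an extractor with H(Y|E(X)) = H(Y|X). Then the optimal predictor's output equals the true posterior: for every x ∈ 𝒳 and y ∈ 𝒴, Pr[E=E(x), Y=y] / Pr[E=E(x)] = q(x,y)/q_X(x). -/

import Mathlib

open scoped BigOperators

/-- Marginal of a joint pmf on the first coordinate: `q_X(x) = ∑ w q(x,w)`. -/
noncomputable def margX {X W : Type*} [Fintype W] (q : X × W → ℝ) (x : X) : ℝ :=
  ∑ w, q (x, w)

open Classical in
/-- `Pr[f = a, W = w] = ∑_{x : f x = a} q(x,w)`. -/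
noncomputable def jointPr {X W A : Type*} [Fintype X] (q : X × W → ℝ)
    (f : X → A) (a : A) (w : W) : ℝ :=
  ∑ x ∈ Finset.univ.filter (fun x => f x = a), q (x, w)

open Classical in
/-- `Pr[f = a] = ∑_{x : f x = a} q_X(x)`. -/
noncomputable def featPr {X W A : Type*} [Fintype X] [Fintype W] (q : X × W → ℝ)
    (f : X → A) (a : A) : ℝ :=
  ∑ x ∈ Finset.univ.filter (fun x => f x = a), margX q x

open Classical in
/-- Conditional entropy `H(W | f(X))`, natural logarithm, with the convention that
summands with `Pr[f=a, W=w] = 0` contribute `0` (automatic since `-0 * log _ = 0`). -/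
noncomputable def condEnt {X W A : Type*} [Fintype X] [Fintype W] (q : X × W → ℝ)
    (f : X → A) : ℝ :=
  ∑ a ∈ Finset.univ.image f, ∑ w,
    -(jointPr q f a w) * Real.log (jointPr q f a w / featPr q f a)

/-- `-log t` valued in `(-∞, ∞]`, with the convention `-log 0 = +∞`. -/
noncomputable def negLog (t : ℝ) : EReal := if t = 0 then ⊤ else ((-(Real.log t) : ℝ) : EReal)

/-- Cross-entropy loss `∑_{x,w} q(x,w) · (-log P(Φ(x))(w))`, valued in `(-∞, ∞]`. -/
noncomputable def condLoss {X W G : Type*} [Fintype X] [Fintype W] (q : X × W → ℝ)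
    (Φ : X → G) (P : G → W → ℝ) : EReal :=
  ∑ x, ∑ w, (q (x, w) : EReal) * negLog (P (Φ x) w)

/-- A conditional probability mass function on labels `W` with feature space `G`. -/
def IsCondPMF {G W : Type*} [Fintype W] (P : G → W → ℝ) : Prop :=
  (∀ g w, 0 ≤ P g w) ∧ ∀ g, ∑ w, P g w = 1

open Classical in
/-- The posterior predictor: `Pr[Φ=g, W=w]/Pr[Φ=g]` on features of positive probability
in the image of `Φ`, and the uniform distribution on `W` otherwise. -/
noncomputable def posteriorPred {X W G : Type*} [Fintype X] [Fintype W] (q : X × W → ℝ)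
    (Φ : X → G) (g : G) (w : W) : ℝ :=
  if g ∈ Set.range Φ ∧ 0 < featPr q Φ g then jointPr q Φ g w / featPr q Φ g
  else 1 / Fintype.card W

/-- The posterior map `π(x)(w) = q(x,w)/q_X(x)`. -/
noncomputable def postMap {X W : Type*} [Fintype W] (q : X × W → ℝ) (x : X) : W → ℝ :=
  fun w => q (x, w) / margX q x

open Real in
lemma logSumKey {X : Type*} (s : Finset X) (a b : X → ℝ) (ha : ∀ x ∈ s, 0 ≤ a x)
    (hb : ∀ x ∈ s, 0 < b x) (hA : 0 < ∑ x ∈ s, a x) :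
    (∑ x ∈ s, a x) * Real.log ((∑ x ∈ s, a x) / (∑ x ∈ s, b x))
      ≤ ∑ x ∈ s, a x * Real.log (a x / b x) ∧
    ((∑ x ∈ s, a x * Real.log (a x / b x)) =
      (∑ x ∈ s, a x) * Real.log ((∑ x ∈ s, a x) / (∑ x ∈ s, b x)) →
      ∀ x ∈ s, a x * (∑ x ∈ s, b x) = b x * (∑ x ∈ s, a x)) := by
  set A := ∑ x ∈ s, a x with hAdef
  set B := ∑ x ∈ s, b x with hBdef
  have hsne : s.Nonempty := by
    by_contra h
    rw [Finset.not_nonempty_iff_eq_empty] at h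
    simp [hAdef, h] at hA
  have hB : 0 < B := Finset.sum_pos hb hsne
  set g : X → ℝ := fun x => a x * Real.log (a x * B / (b x * A)) - a x + (A / B) * b x with hg
  have hloginv : ∀ x : X, Real.log (a x * B / (b x * A)) = - Real.log (b x * A / (a x * B)) := by
    intro x
    rw [show a x * B / (b x * A) = (b x * A / (a x * B))⁻¹ by rw [inv_div], Real.log_inv]
  have hg0 : ∀ x ∈ s, 0 ≤ g x := by
    intro x hx
    have hbx := hb x hx
    rcases eq_or_lt_of_le (ha x hx) with h0 | h0
    · simp only [hg, ← h0, zero_mul, sub_zero, zero_add]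
      positivity
    · have hlog : 1 - (b x * A) / (a x * B) ≤ Real.log (a x * B / (b x * A)) := by
        have := Real.log_le_sub_one_of_pos (x := (b x * A) / (a x * B)) (by positivity)
        rw [hloginv x]; linarith
      have hrw : a x * ((b x * A) / (a x * B)) = (A / B) * b x := by
        field_simp
      have := mul_le_mul_of_nonneg_left hlog (le_of_lt h0)
      simp only [hg]
      nlinarith [this]
  have hgsum : ∑ x ∈ s, g x = (∑ x ∈ s, a x * Real.log (a x / b x)) - A * Real.log (A / B) := by
    have hterm : ∀ x ∈ s, a x * Real.log (a x * B / (b x * A))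
        = a x * Real.log (a x / b x) - a x * Real.log (A / B) := by
      intro x hx
      rcases eq_or_lt_of_le (ha x hx) with h0 | h0
      · simp [← h0]
      · have hbx := hb x hx
        rw [show a x * B / (b x * A) = (a x / b x) / (A / B) by field_simp,
          Real.log_div (by positivity) (by positivity)]
        ring
    simp only [hg]
    rw [Finset.sum_add_distrib, Finset.sum_sub_distrib, Finset.sum_congr rfl hterm,
      Finset.sum_sub_distrib, ← Finset.sum_mul, ← Finset.mul_sum, ← hAdef, ← hBdef]
    have : A / B * B = A := div_mul_cancel₀ A hB.ne'
    linarith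
  have hineq : A * Real.log (A / B) ≤ ∑ x ∈ s, a x * Real.log (a x / b x) := by
    have := Finset.sum_nonneg hg0
    linarith [hgsum ▸ this]
  refine ⟨hineq, ?_⟩
  intro heq x hx
  have hzero : ∑ x ∈ s, g x = 0 := by rw [hgsum, heq]; ring
  have hgx : g x = 0 := (Finset.sum_eq_zero_iff_of_nonneg hg0).1 hzero x hx
  have hbx := hb x hx
  rcases eq_or_lt_of_le (ha x hx) with h0 | h0
  · exfalso
    simp only [hg, ← h0, zero_mul, sub_zero, zero_add] at hgx
    have : 0 < A / B * b x := by positivity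
    linarith
  · by_contra hne
    have hbA : (0:ℝ) < b x * A := by positivity
    have htne : b x * A / (a x * B) ≠ 1 := by
      intro h1
      rw [div_eq_one_iff_eq (by positivity)] at h1
      exact hne h1.symm
    have hstrict : 1 - (b x * A) / (a x * B) < Real.log (a x * B / (b x * A)) := by
      have := Real.log_lt_sub_one_of_pos (x := (b x * A) / (a x * B)) (by positivity) htne
      rw [hloginv x]; linarith
    have hrw : a x * ((b x * A) / (a x * B)) = (A / B) * b x := by field_simp
    have := mul_lt_mul_of_pos_left hstrict h0
    simp only [hg] at hgx
    nlinarith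

/-- Corollary 2, predictor part: if `H(Y|E(X)) = H(Y|X)` then the
optimal predictor's output equals the true posterior:
`Pr[E=E(x), Y=y]/Pr[E=E(x)] = q(x,y)/q_X(x)` for all `x, y`. -/
theorem statement11 {X Y F : Type*} [Fintype X] [Nonempty X] [Fintype Y] [Nonempty Y]
    (q : X × Y → ℝ) (hq0 : ∀ p, 0 ≤ q p) (hq1 : ∑ p, q p = 1)
    (hqX : ∀ x, 0 < margX q x) (E : X → F)
    (hE : condEnt q E = condEnt q id) :
    ∀ (x : X) (y : Y),
      jointPr q E (E x) y / featPr q E (E x) = q (x, y) / margX q x := by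
  classical
  have hjid : ∀ (x : X) (y : Y), jointPr q id x y = q (x, y) := by
    intro x y
    rw [jointPr, Finset.sum_filter]
    simp
  have hfid : ∀ x : X, featPr q id x = margX q x := by
    intro x
    rw [featPr, Finset.sum_filter]
    simp
  have hid : condEnt q id = ∑ x, ∑ y, -(q (x, y)) * Real.log (q (x, y) / margX q x) := by
    rw [condEnt, Finset.image_id]
    exact Finset.sum_congr rfl fun x _ => Finset.sum_congr rfl fun y _ => by rw [hjid, hfid]
  set Tm : F → Y → ℝ := fun a y =>
    (∑ x ∈ Finset.univ.filter (fun x => E x = a), q (x, y) * Real.log (q (x, y) / margX q x))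
      - jointPr q E a y * Real.log (jointPr q E a y / featPr q E a) with hTm
  have hJ : ∀ (a : F) (y : Y),
      jointPr q E a y = ∑ x ∈ Finset.univ.filter (fun x => E x = a), q (x, y) := by
    intro a y; rw [jointPr]
  have hF : ∀ a : F,
      featPr q E a = ∑ x ∈ Finset.univ.filter (fun x => E x = a), margX q x := by
    intro a; rw [featPr]
  have hjoint0 : ∀ a y, 0 ≤ jointPr q E a y := by
    intro a y; rw [hJ]; exact Finset.sum_nonneg fun x _ => hq0 _
  have hfeatpos : ∀ a ∈ Finset.univ.image E, 0 < featPr q E a := by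
    intro a ha
    obtain ⟨x0, _, hx0⟩ := Finset.mem_image.1 ha
    rw [hF]
    exact Finset.sum_pos' (fun x' _ => (hqX x').le) ⟨x0, by simp [hx0], hqX x0⟩
  have hT0 : ∀ a ∈ Finset.univ.image E, ∀ y : Y, 0 ≤ Tm a y := by
    intro a ha y
    rcases eq_or_lt_of_le (hjoint0 a y) with h0 | h0
    · have hall : ∀ x ∈ Finset.univ.filter (fun x => E x = a), q (x, y) = 0 :=
        (Finset.sum_eq_zero_iff_of_nonneg (fun x _ => hq0 _)).1 ((hJ a y) ▸ h0.symm)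
      have h1 : (∑ x ∈ Finset.univ.filter (fun x => E x = a),
          q (x, y) * Real.log (q (x, y) / margX q x)) = 0 :=
        Finset.sum_eq_zero fun x hx => by rw [hall x hx]; ring
      simp [hTm, h1, ← h0]
    · have key := (logSumKey (Finset.univ.filter (fun x => E x = a)) (fun x => q (x, y))
        (fun x => margX q x) (fun x _ => hq0 _) (fun x _ => hqX x)
        (by rw [← hJ]; exact h0)).1
      rw [hTm]
      dsimp only
      rw [hJ, hF]
      linarith
  have hzero : ∑ a ∈ Finset.univ.image E, ∑ y, Tm a y = 0 := by
    have h1 : ∑ a ∈ Finset.univ.image E, ∑ y, ∑ x ∈ Finset.univ.filter (fun x => E x = a),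
          q (x, y) * Real.log (q (x, y) / margX q x)
        = ∑ x, ∑ y, q (x, y) * Real.log (q (x, y) / margX q x) := by
      rw [Finset.sum_congr rfl (fun a _ => Finset.sum_comm)]
      exact Finset.sum_fiberwise_of_maps_to (fun x _ => Finset.mem_image_of_mem E (Finset.mem_univ x)) _
    simp only [hTm, Finset.sum_sub_distrib]
    rw [h1]
    have h2 : condEnt q E = -∑ a ∈ Finset.univ.image E, ∑ y,
        jointPr q E a y * Real.log (jointPr q E a y / featPr q E a) := by
      rw [condEnt]
      simp [neg_mul, Finset.sum_neg_distrib]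
    have h3 : condEnt q id = -∑ x, ∑ y, q (x, y) * Real.log (q (x, y) / margX q x) := by
      rw [hid]
      simp [neg_mul, Finset.sum_neg_distrib]
    rw [h2, h3] at hE
    linarith
  have hTz : ∀ a ∈ Finset.univ.image E, ∀ y : Y, Tm a y = 0 := by
    intro a ha y
    have houter := (Finset.sum_eq_zero_iff_of_nonneg
      (fun a ha => Finset.sum_nonneg fun y _ => hT0 a ha y)).1 hzero a ha
    exact (Finset.sum_eq_zero_iff_of_nonneg (fun y _ => hT0 a ha y)).1 houter y (Finset.mem_univ y)
  intro x y
  have hamem : E x ∈ Finset.univ.image E := Finset.mem_image_of_mem E (Finset.mem_univ x)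
  have hxmem : x ∈ Finset.univ.filter (fun x' => E x' = E x) := by simp
  have hFpos := hfeatpos (E x) hamem
  rcases eq_or_lt_of_le (hjoint0 (E x) y) with h0 | h0
  · have hall : ∀ x' ∈ Finset.univ.filter (fun x' => E x' = E x), q (x', y) = 0 :=
      (Finset.sum_eq_zero_iff_of_nonneg (fun x' _ => hq0 _)).1 ((hJ (E x) y) ▸ h0.symm)
    rw [← h0, hall x hxmem]
    simp
  · have hTeq := hTz (E x) hamem y
    rw [hTm] at hTeq
    dsimp only at hTeq
    rw [hJ, hF] at hTeq
    have key := (logSumKey (Finset.univ.filter (fun x' => E x' = E x)) (fun x' => q (x', y))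
      (fun x' => margX q x') (fun x' _ => hq0 _) (fun x' _ => hqX x')
      (by rw [← hJ]; exact h0)).2 (by linarith) x hxmem
    have hB : 0 < ∑ x' ∈ Finset.univ.filter (fun x' => E x' = E x), margX q x' := by
      rw [← hF]; exact hFpos
    rw [hJ, hF, div_eq_div_iff hB.ne' (hqX x).ne']
    linarith [key]
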